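/- Let T be a nonempty string that has a nonempty proper border, let B be its longest nonempty proper border, and let C be the shortest cover of B. If C is a cover of T, then C is the shortest cover of T; if C is not a cover of T, then T is superprimitive, i.e., the shortest cover of T is T itself. -/

import Mathlib

/-!
STATEMENT 6: Let `T` be a nonempty string that has a nonempty proper border,
let `B` be its longest nonempty proper border, and let `C` be the shortest
cover of `B`.  If `C` is a cover of `T`, then `C` is the shortest cover of
`T`; if `C` is not a cover of `T`, then `T` is superprimitive, i.e. the
shortest cover of `T` is `T` itself (equivalently, every cover of `T` is `T`).
Strings are modelled as lists; positions are 0-based.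
-/

variable {α : Type*}

/-- `i` is a (0-based) starting position of an occurrence of `C` in `T`. -/
def IsOcc (T C : List α) (i : ℕ) : Prop :=
  i + C.length ≤ T.length ∧ (T.drop i).take C.length = C

/-- Position `p` (0-based) of `T` lies within an occurrence of `C` in `T`. -/
def CoveredPos (T C : List α) (p : ℕ) : Prop :=
  ∃ i, IsOcc T C i ∧ i ≤ p ∧ p < i + C.length

/-- `C` is a cover of `T`: `C` fits into `T` and every position of `T`
lies within an occurrence of `C`. -/
def IsCover (C T : List α) : Prop :=
  C.length ≤ T.length ∧ ∀ p, p < T.length → CoveredPos T C p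

/-- `B` is a border of `T`: `B` is both a prefix and a suffix of `T`. -/
def IsBorder (B T : List α) : Prop :=
  B <+: T ∧ B <:+ T


lemma cover_pos {C T : List α} (h : IsCover C T) (hT : T ≠ []) : 0 < C.length := by
  obtain ⟨i, _, h1, h2⟩ := h.2 0 (List.length_pos_iff.mpr hT)
  omega

lemma cover_prefix {C T : List α} (h : IsCover C T) (hT : T ≠ []) : C <+: T := by
  obtain ⟨i, ⟨hle, heq⟩, h1, h2⟩ := h.2 0 (List.length_pos_iff.mpr hT)
  have hi : i = 0 := by omega
  subst hi
  simp only [List.drop_zero] at heq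
  exact List.prefix_iff_eq_take.mpr heq.symm

lemma cover_suffix {C T : List α} (h : IsCover C T) (hT : T ≠ []) : C <:+ T := by
  have hTpos : 0 < T.length := List.length_pos_iff.mpr hT
  obtain ⟨i, ⟨hle, heq⟩, h1, h2⟩ := h.2 (T.length - 1) (by omega)
  have hd : C = T.drop i := by
    have hlen2 : (T.drop i).length ≤ C.length := by
      rw [List.length_drop]; omega
    rw [← heq]
    exact List.take_of_length_le hlen2
  exact hd ▸ List.drop_suffix i T

lemma cover_trans {C C' T : List α} (h1 : IsCover C C') (h2 : IsCover C' T) :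
    IsCover C T := by
  refine ⟨h1.1.trans h2.1, fun p hp => ?_⟩
  obtain ⟨j, ⟨hj, hjeq⟩, hj1, hj2⟩ := h2.2 p hp
  obtain ⟨k, ⟨hk, hkeq⟩, hk1, hk2⟩ := h1.2 (p - j) (by omega)
  refine ⟨j + k, ⟨by omega, ?_⟩, by omega, by omega⟩
  have e : List.drop k (List.take C'.length (T.drop j)) = List.take (C'.length - k) (List.drop k (T.drop j)) := List.drop_take
  rw [hjeq] at e
  rw [e, List.take_take, min_eq_left (by omega)] at hkeq
  rw [← List.drop_drop]
  exact hkeq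

lemma cover_border {C B T : List α} (hCT : IsCover C T) (hT : T ≠ [])
    (hBp : B <+: T) (hBs : B <:+ T) (hlen : C.length ≤ B.length) : IsCover C B := by
  have hCp : C <+: T := cover_prefix hCT hT
  have hCpB : C <+: B := List.prefix_of_prefix_length_le hCp hBp hlen
  have hBlen : B.length ≤ T.length := hBp.length_le
  have hCpos : 0 < C.length := cover_pos hCT hT
  refine ⟨hlen, fun p hp => ?_⟩
  by_cases hpc : p < C.length
  · exact ⟨0, ⟨by omega, by simpa using (List.prefix_iff_eq_take.mp hCpB).symm⟩,
      by omega, by omega⟩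
  · obtain ⟨s, hs⟩ := hBs
    have hslen : s.length = T.length - B.length := by
      have := congrArg List.length hs
      simp at this; omega
    have hBdrop : T.drop s.length = B := by
      rw [← hs]; exact List.drop_left
    obtain ⟨j, ⟨hj, hjeq⟩, hj1, hj2⟩ := hCT.2 (p + s.length) (by omega)
    have hΔj : s.length ≤ j := by omega
    refine ⟨j - s.length, ⟨by omega, ?_⟩, by omega, by omega⟩
    rw [← hBdrop, List.drop_drop]
    have h' : s.length + (j - s.length) = j := by omega
    rw [h']
    exact hjeq

theorem AFI_recursion_step (T B C : List α) (hT : T ≠ [])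
    (hB : IsBorder B T) (hBne : B ≠ []) (hBproper : B.length < T.length)
    (hBmax : ∀ B'' : List α, IsBorder B'' T → B'' ≠ [] → B''.length < T.length →
      B''.length ≤ B.length)
    (hC : IsCover C B) (hCmin : ∀ C' : List α, IsCover C' B → C.length ≤ C'.length) :
    (IsCover C T → ∀ C' : List α, IsCover C' T → C.length ≤ C'.length) ∧
    (¬ IsCover C T → ∀ C' : List α, IsCover C' T → C' = T) := by
  have hTpos : 0 < T.length := List.length_pos_iff.mpr hT
  have hClen : C.length ≤ B.length := hC.1
  have key : ∀ C' : List α, IsCover C' T → C' ≠ T → IsCover C' B ∧ C'.length ≤ B.length := by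
    intro C' hC' hne
    have hpre : C' <+: T := cover_prefix hC' hT
    have hsuf : C' <:+ T := cover_suffix hC' hT
    have hlt : C'.length < T.length :=
      lt_of_le_of_ne hC'.1 (fun h => hne (hpre.eq_of_length h))
    have hne' : C' ≠ [] := by
      have := cover_pos hC' hT
      intro h; simp [h] at this
    have hle : C'.length ≤ B.length := hBmax C' ⟨hpre, hsuf⟩ hne' hlt
    exact ⟨cover_border hC' hT hB.1 hB.2 hle, hle⟩
  constructor
  · intro _ C' hC'
    by_cases hne : C' = T
    · subst hne; omega
    · exact hCmin C' (key C' hC' hne).1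
  · intro hnCT C' hC'
    by_contra hne
    obtain ⟨hC'B, hle⟩ := key C' hC' hne
    have hC'p : C' <+: B := List.prefix_of_prefix_length_le (cover_prefix hC' hT) hB.1 hle
    have hC's : C' <:+ B := List.suffix_of_suffix_length_le (cover_suffix hC' hT) hB.2 hle
    have hCC' : IsCover C C' := cover_border hC hBne hC'p hC's (hCmin C' hC'B)
    exact hnCT (cover_trans hCC' hC')
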